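/- Let n ≥ 1 and m ≥ 1 be integers and let u₀ : ℝⁿ → ℂ be a Schwartz function. Then for every x ∈ ℝⁿ, the Poisson integral ∫_{ℝⁿ} E_{m,a}(x − y) u₀(y) dy tends to u₀(x) as a → 0⁺; that is, the Poisson integral attains the initial condition of the Cauchy problem for the polyharmonic heat equation. -/

import Mathlib

open MeasureTheory Real Complex

noncomputable def heatKernel (n m : ℕ) (a : ℝ) (x : EuclideanSpace ℝ (Fin n)) : ℂ :=
  ((2 * Real.pi) ^ n : ℝ)⁻¹ •
    ∫ s : EuclideanSpace ℝ (Fin n),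
      Complex.exp (Complex.I * ((inner ℝ x s : ℝ) : ℂ) - (a : ℂ) * ((‖s‖ : ℝ) : ℂ) ^ (2 * m))

open scoped FourierTransform RealInnerProductSpace

lemma hk_sq_le {t : ℝ} (ht : 0 ≤ t) {m : ℕ} (hm : 1 ≤ m) :
    t ^ 2 ≤ 1 + t ^ (2 * m) := by
  rcases le_total t 1 with h | h
  · have h1 : t ^ 2 ≤ 1 := pow_le_one₀ ht h
    have h2 : 0 ≤ t ^ (2 * m) := pow_nonneg ht _
    linarith
  · have h2 : t ^ 2 ≤ t ^ (2 * m) := pow_le_pow_right₀ h (by omega)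
    linarith

lemma hk_integrable (n : ℕ) {a : ℝ} (ha : 0 < a) {m : ℕ} (hm : 1 ≤ m) :
    Integrable (fun s : EuclideanSpace ℝ (Fin n) => Real.exp (-a * ‖s‖ ^ (2 * m))) := by
  have hgauss : Integrable
      (fun s : EuclideanSpace ℝ (Fin n) => Real.exp a * Real.exp (-a * ‖s‖ ^ 2)) := by
    refine Integrable.const_mul ?_ _
    have h := (GaussianFourier.integrable_cexp_neg_mul_sq_norm_add
      (V := EuclideanSpace ℝ (Fin n)) (b := (a : ℂ)) (by simpa using ha) 0 0).norm
    simpa [Complex.norm_exp, ← Complex.ofReal_pow, neg_mul] using h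
  refine hgauss.mono' (Continuous.aestronglyMeasurable (by fun_prop)) ?_
  filter_upwards with s
  rw [Real.norm_eq_abs, abs_of_pos (Real.exp_pos _), ← Real.exp_add]
  apply Real.exp_le_exp.2
  nlinarith [hk_sq_le (norm_nonneg s) hm, ha.le]

lemma hk_re (r a t : ℝ) (k : ℕ) :
    (Complex.I * (r : ℂ) - (a : ℂ) * ((t : ℝ) : ℂ) ^ k).re = -(a * t ^ k) := by
  simp [← Complex.ofReal_pow]

theorem poisson_integral_initial_condition (n m : ℕ) (hn : 1 ≤ n) (hm : 1 ≤ m)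
    (u₀ : SchwartzMap (EuclideanSpace ℝ (Fin n)) ℂ) :
    ∀ x : EuclideanSpace ℝ (Fin n),
      Filter.Tendsto
        (fun a : ℝ => ∫ y : EuclideanSpace ℝ (Fin n), heatKernel n m a (x - y) * u₀ y)
        (nhdsWithin 0 (Set.Ioi 0)) (nhds (u₀ x)) := by
  intro x
  have h2π : (0 : ℝ) < 2 * π := by positivity
  set c : ℝ := ((2 * π) ^ n)⁻¹ with hc
  set K : ℝ → EuclideanSpace ℝ (Fin n) → ℂ := fun a s =>
    Complex.exp (Complex.I * ((inner ℝ x s : ℝ) : ℂ) - (a : ℂ) * ((‖s‖ : ℝ) : ℂ) ^ (2 * m))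
    with hK
  set F : EuclideanSpace ℝ (Fin n) → ℂ := fun s => 𝓕 (⇑u₀) ((2 * π)⁻¹ • s) with hF
  have hFhat : Integrable (𝓕 (⇑u₀)) := (SchwartzMap.fourierTransformCLM ℂ u₀).integrable
  have hFint : Integrable F := hFhat.comp_smul (inv_ne_zero h2π.ne')
  have hFcont : Continuous F :=
    (SchwartzMap.fourierTransformCLM ℂ u₀).continuous.comp (continuous_const_smul _)
  have hKnorm : ∀ (a : ℝ) (s : EuclideanSpace ℝ (Fin n)),
      ‖K a s‖ = Real.exp (-(a * ‖s‖ ^ (2 * m))) := by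
    intro a s
    rw [hK, Complex.norm_exp, hk_re]
  have hFs : ∀ s : EuclideanSpace ℝ (Fin n),
      (∫ y, Complex.exp (Complex.I * ((-(inner ℝ y s : ℝ) : ℝ) : ℂ)) * u₀ y) = F s := by
    intro s
    simp only [hF]
    rw [Real.fourier_eq']
    refine congrArg (integral volume) (funext fun y => ?_)
    rw [smul_eq_mul]
    congr 1
    rw [real_inner_smul_right]
    have hr : -2 * π * ((2 * π)⁻¹ * (inner ℝ y s : ℝ)) = -(inner ℝ y s : ℝ) := by
      field_simp
    rw [hr]
    push_cast
    ring
  have hsplit : ∀ (a : ℝ) (y s : EuclideanSpace ℝ (Fin n)),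
      Complex.exp (Complex.I * ((inner ℝ (x - y) s : ℝ) : ℂ)
          - (a : ℂ) * ((‖s‖ : ℝ) : ℂ) ^ (2 * m))
        = K a s * Complex.exp (Complex.I * ((-(inner ℝ y s : ℝ) : ℝ) : ℂ)) := by
    intro a y s
    rw [hK, ← Complex.exp_add]
    congr 1
    have h1 : (inner ℝ (x - y) s : ℝ) = inner ℝ x s - inner ℝ y s := inner_sub_left _ _ _
    rw [h1]
    push_cast
    ring
  have key : ∀ a : ℝ, a ∈ Set.Ioi (0 : ℝ) →
      (∫ y, heatKernel n m a (x - y) * u₀ y) = c • ∫ s, K a s * F s := by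
    intro a ha
    replace ha : 0 < a := ha
    have hint : Integrable (Function.uncurry fun y s : EuclideanSpace ℝ (Fin n) =>
        Complex.exp (Complex.I * ((inner ℝ (x - y) s : ℝ) : ℂ)
          - (a : ℂ) * ((‖s‖ : ℝ) : ℂ) ^ (2 * m)) * u₀ y) (volume.prod volume) := by
      have hb : Integrable (fun p : (EuclideanSpace ℝ (Fin n)) × (EuclideanSpace ℝ (Fin n)) =>
          ‖u₀ p.1‖ * Real.exp (-a * ‖p.2‖ ^ (2 * m))) (volume.prod volume) :=
        (u₀.integrable.norm).mul_prod (hk_integrable n ha hm)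
      refine hb.mono' (Continuous.aestronglyMeasurable ?_) ?_
      · apply Continuous.mul ?_ (u₀.continuous.comp continuous_fst)
        apply Complex.continuous_exp.comp
        apply Continuous.sub
        · exact continuous_const.mul
            (Complex.continuous_ofReal.comp ((continuous_const.sub continuous_fst).inner
              continuous_snd))
        · exact continuous_const.mul ((Complex.continuous_ofReal.comp continuous_snd.norm).pow _)
      · filter_upwards with p
        rw [Function.uncurry, norm_mul]
        rw [show ‖Complex.exp (Complex.I * ((inner ℝ (x - p.1) p.2 : ℝ) : ℂ)
            - (a : ℂ) * ((‖p.2‖ : ℝ) : ℂ) ^ (2 * m))‖ = Real.exp (-(a * ‖p.2‖ ^ (2 * m))) from by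
          rw [Complex.norm_exp, hk_re]]
        rw [neg_mul, mul_comm]
    calc (∫ y, heatKernel n m a (x - y) * u₀ y)
        = ∫ y, c • ((∫ s, Complex.exp (Complex.I * ((inner ℝ (x - y) s : ℝ) : ℂ)
            - (a : ℂ) * ((‖s‖ : ℝ) : ℂ) ^ (2 * m))) * u₀ y) := by
          simp only [heatKernel, smul_mul_assoc, hc]
      _ = c • ∫ y, (∫ s, Complex.exp (Complex.I * ((inner ℝ (x - y) s : ℝ) : ℂ)
            - (a : ℂ) * ((‖s‖ : ℝ) : ℂ) ^ (2 * m))) * u₀ y := integral_smul _ _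
      _ = c • ∫ y, ∫ s, Complex.exp (Complex.I * ((inner ℝ (x - y) s : ℝ) : ℂ)
            - (a : ℂ) * ((‖s‖ : ℝ) : ℂ) ^ (2 * m)) * u₀ y := by
          simp_rw [← integral_mul_const]
      _ = c • ∫ s, ∫ y, Complex.exp (Complex.I * ((inner ℝ (x - y) s : ℝ) : ℂ)
            - (a : ℂ) * ((‖s‖ : ℝ) : ℂ) ^ (2 * m)) * u₀ y := by
          rw [integral_integral_swap hint]
      _ = c • ∫ s, K a s * F s := by
          congr 1
          refine congrArg (integral volume) (funext fun s => ?_)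
          calc (∫ y, Complex.exp (Complex.I * ((inner ℝ (x - y) s : ℝ) : ℂ)
                - (a : ℂ) * ((‖s‖ : ℝ) : ℂ) ^ (2 * m)) * u₀ y)
              = ∫ y, K a s * (Complex.exp (Complex.I * ((-(inner ℝ y s : ℝ) : ℝ) : ℂ)) * u₀ y) := by
                refine congrArg (integral volume) (funext fun y => ?_)
                rw [hsplit a y s, mul_assoc]
            _ = K a s * ∫ y, Complex.exp (Complex.I * ((-(inner ℝ y s : ℝ) : ℝ) : ℂ)) * u₀ y :=
                integral_const_mul _ _
            _ = K a s * F s := by rw [hFs s]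
  have lim : Filter.Tendsto (fun a : ℝ => ∫ s, K a s * F s) (nhdsWithin 0 (Set.Ioi 0))
      (nhds (∫ s, K 0 s * F s)) := by
    apply tendsto_integral_filter_of_dominated_convergence (fun s => ‖F s‖)
    · filter_upwards with a
      refine Continuous.aestronglyMeasurable (Continuous.mul ?_ hFcont)
      apply Complex.continuous_exp.comp
      apply Continuous.sub
      · exact continuous_const.mul (Complex.continuous_ofReal.comp (continuous_const.inner
          continuous_id))
      · exact continuous_const.mul ((Complex.continuous_ofReal.comp continuous_norm).pow _)
    · filter_upwards [self_mem_nhdsWithin] with a ha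
      replace ha : 0 < a := ha
      filter_upwards with s
      rw [norm_mul, hKnorm a s]
      have h1 : Real.exp (-(a * ‖s‖ ^ (2 * m))) ≤ 1 := by
        rw [Real.exp_le_one_iff]
        have : 0 ≤ a * ‖s‖ ^ (2 * m) := by positivity
        linarith
      exact mul_le_of_le_one_left (norm_nonneg _) h1
    · exact hFint.norm
    · filter_upwards with s
      have hcont : Continuous (fun a : ℝ => K a s * F s) := by
        apply Continuous.mul ?_ continuous_const
        apply Complex.continuous_exp.comp
        exact (continuous_const.sub ((Complex.continuous_ofReal).mul continuous_const))
      exact (hcont.tendsto 0).mono_left nhdsWithin_le_nhds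
  have final : c • (∫ s, K 0 s * F s) = u₀ x := by
    have hinv : 𝓕⁻ (𝓕 (⇑u₀)) x = u₀ x :=
      congrFun (Continuous.fourierInv_fourier_eq u₀.continuous u₀.integrable hFhat) x
    have hcv := Measure.integral_comp_smul_of_nonneg (μ := (volume : Measure (EuclideanSpace ℝ (Fin n))))
        (fun s => K 0 s * F s) (2 * π) (hR := h2π.le)
    have hG : ∀ ξ : EuclideanSpace ℝ (Fin n), K 0 ((2 * π) • ξ) * F ((2 * π) • ξ)
        = Complex.exp (((2 * π * (inner ℝ ξ x : ℝ) : ℝ) : ℂ) * Complex.I) • 𝓕 (⇑u₀) ξ := by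
      intro ξ
      simp only [hK, hF]
      rw [smul_smul, inv_mul_cancel₀ h2π.ne', one_smul, smul_eq_mul]
      congr 1
      rw [real_inner_smul_right, real_inner_comm x ξ]
      push_cast
      ring
    rw [show (∫ ξ, (fun s => K 0 s * F s) ((2 * π) • ξ)) = 𝓕⁻ (𝓕 (⇑u₀)) x from by
        rw [Real.fourierInv_eq']
        exact congrArg (integral volume) (funext fun ξ => hG ξ)] at hcv
    rw [hinv, finrank_euclideanSpace_fin] at hcv
    exact hcv.symm
  have T : Filter.Tendsto (fun a : ℝ => c • ∫ s, K a s * F s) (nhdsWithin 0 (Set.Ioi 0))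
      (nhds (u₀ x)) := by
    rw [← final]
    exact lim.const_smul c
  refine T.congr' ?_
  exact Filter.eventuallyEq_of_mem self_mem_nhdsWithin fun a ha => (key a ha).symm
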